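/- Let F be a field of characteristic zero (or of characteristic p > 2 with p not dividing e − 2), and let e ≥ 3. Let C be the e(e−1) × e(e−1) matrix over F with rows/columns indexed by ordered pairs (i,j), i ≠ j in {1,…,e}, defined by C_{(i,j),(i,j)} = −1, C_{(i,j),(l,i)} = 1 for every l ≠ i with (l,i) ≠ (i,j), and all other entries 0. Then det C = (e−2)·(−2)^{e−1}·(−1)^{e(e−2)}, and in particular det C ≠ 0. -/

import Mathlib

theorem stmt18 (F : Type*) [Field F] (e : ℕ) (he : 3 ≤ e)
    (hchar2 : (2 : F) ≠ 0) (hche : (e : F) - 2 ≠ 0)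
    (C : Matrix {p : Fin e × Fin e // p.1 ≠ p.2} {p : Fin e × Fin e // p.1 ≠ p.2} F)
    (hC : ∀ p q, C p q =
      if q = p then -1 else if (q : Fin e × Fin e).2 = (p : Fin e × Fin e).1 then 1 else 0) :
    C.det = ((e : F) - 2) * (-2) ^ (e - 1) * (-1) ^ (e * (e - 2)) ∧ C.det ≠ 0 := by
  classical
  set U : Matrix {p : Fin e × Fin e // p.1 ≠ p.2} (Fin e) F :=
    fun p k => if k = (p : Fin e × Fin e).1 then 1 else 0 with hU
  set V : Matrix (Fin e) {p : Fin e × Fin e // p.1 ≠ p.2} F :=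
    fun k p => if (p : Fin e × Fin e).2 = k then 1 else 0 with hV
  have h21 : (2 : F) * 2⁻¹ = 1 := mul_inv_cancel₀ hchar2
  have hCUV : C = U * V - 1 := by
    ext p q
    rw [hC]
    simp only [Matrix.sub_apply, Matrix.mul_apply, Matrix.one_apply]
    simp only [hU, hV]
    by_cases hqp : q = p
    · subst hqp
      have h1 : (q : Fin e × Fin e).2 ≠ (q : Fin e × Fin e).1 := (Ne.symm q.2)
      simp [h1]
    · by_cases h2 : (q : Fin e × Fin e).2 = (p : Fin e × Fin e).1
      · simp [hqp, h2, Finset.sum_ite_eq, Ne.symm hqp]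
      · simp only [if_neg hqp, if_neg h2, if_neg (Ne.symm hqp)]
        rw [Finset.sum_eq_zero, sub_zero]
        intro k _
        by_cases hk : k = (p : Fin e × Fin e).1
        · subst hk
          simp [h2]
        · simp [hk]
  have hVU : ∀ k k', (V * U) k k' = if k' = k then 0 else 1 := by
    intro k k'
    simp only [Matrix.mul_apply]
    simp only [hU, hV]
    by_cases hkk : k' = k
    · subst hkk
      rw [Finset.sum_eq_zero, if_pos rfl]
      intro p _
      by_cases h1 : (p : Fin e × Fin e).2 = k'
      · have : k' ≠ (p : Fin e × Fin e).1 := by rw [← h1]; exact Ne.symm p.2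
        simp [h1, this]
      · simp [h1]
    · rw [if_neg hkk]
      rw [Finset.sum_eq_single (⟨(k', k), hkk⟩ : {p : Fin e × Fin e // p.1 ≠ p.2})]
      · simp
      · intro p _ hp
        by_cases h1 : (p : Fin e × Fin e).2 = k
        · by_cases h2 : k' = (p : Fin e × Fin e).1
          · exact absurd (Subtype.ext (Prod.ext h2.symm h1)) hp
          · simp [h2]
        · simp [h1]
      · intro h
        exact absurd (Finset.mem_univ _) h
  set A : Matrix (Fin e) (Fin 1) F := Matrix.replicateCol (Fin 1) (fun _ => -(2⁻¹ : F)) with hA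
  set B : Matrix (Fin 1) (Fin e) F := Matrix.replicateRow (Fin 1) (fun _ => (1 : F)) with hB
  have hW : (1 : Matrix (Fin e) (Fin e) F) - V * U = (2 : F) • (1 + A * B) := by
    ext k k'
    simp only [Matrix.sub_apply, Matrix.smul_apply, Matrix.add_apply, Matrix.one_apply,
      Matrix.mul_apply, hVU, hA, hB, Matrix.replicateCol_apply, Matrix.replicateRow_apply, Fin.sum_univ_one,
      smul_eq_mul]
    by_cases hkk : k = k'
    · rw [if_pos hkk, if_pos hkk.symm]
      linear_combination h21
    · rw [if_neg hkk, if_neg (Ne.symm hkk)]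
      linear_combination h21
  have hdet1 : C.det = (-1 : F) ^ Fintype.card {p : Fin e × Fin e // p.1 ≠ p.2} *
      (1 - V * U).det := by
    rw [hCUV]
    have h : U * V - 1 = (-1 : F) • (1 - U * V) := by rw [neg_one_smul, neg_sub]
    rw [h, Matrix.det_smul, Matrix.det_one_sub_mul_comm]
  have hdet2 : (1 - V * U).det = (2 : F) ^ e * (1 - (e : F) * 2⁻¹) := by
    erw [hW, Matrix.det_smul, Fintype.card_fin, hA, hB, Matrix.det_one_add_replicateCol_mul_replicateRow (ι := Fin 1)]
    congr 1
    simp [dotProduct, Finset.sum_const, mul_comm]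
    ring
  have hcard : Fintype.card {p : Fin e × Fin e // p.1 ≠ p.2} = e * e - e := by
    have h1 : Fintype.card {p : Fin e × Fin e // p.1 ≠ p.2} =
        Fintype.card (Fin e × Fin e) - Fintype.card {p : Fin e × Fin e // p.1 = p.2} :=
      Fintype.card_subtype_compl _
    have h2 : Fintype.card {p : Fin e × Fin e // p.1 = p.2} = Fintype.card (Fin e) :=
      Fintype.card_congr
        ⟨fun p => p.1.1, fun i => ⟨(i, i), rfl⟩,
          fun ⟨⟨a, b⟩, h⟩ => by simp only at h; subst h; rfl, fun i => rfl⟩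
    rw [h1, h2, Fintype.card_prod, Fintype.card_fin]
  have hval : C.det = (-1 : F) ^ (e * e - e) * ((2 : F) ^ e * (1 - (e : F) * 2⁻¹)) := by
    rw [hdet1, hdet2, hcard]
  have he1 : e * e - e = e * (e - 2) + (e - 1) + 1 := by
    have h : e * e = e * (e - 2) + (e - 1) + 1 + e := by
      have h2 : e - 2 + 2 = e := by omega
      calc e * e = e * ((e - 2) + 2) := by rw [h2]
        _ = e * (e - 2) + 2 * e := by ring
        _ = e * (e - 2) + (e - 1) + 1 + e := by omega
    omega
  have hp2 : (2 : F) ^ e = 2 * 2 ^ (e - 1) := by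
    conv_lhs => rw [show e = (e - 1) + 1 from by omega]
    rw [pow_succ]; ring
  have hne2 : (-2 : F) ^ (e - 1) = (-1 : F) ^ (e - 1) * 2 ^ (e - 1) := by
    rw [← neg_one_mul, mul_pow]
  have key : C.det = ((e : F) - 2) * (-2) ^ (e - 1) * (-1) ^ (e * (e - 2)) := by
    rw [hval, he1, pow_add, pow_add, pow_one, hp2, hne2]
    have h2e : (2 : F) * (1 - (e : F) * 2⁻¹) = 2 - e := by
      rw [mul_sub, mul_one, ← mul_assoc, mul_comm (2:F) ((e:F))]
      rw [mul_assoc, h21, mul_one]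
    linear_combination ((-1 : F) ^ (e * (e - 2)) * (-1 : F) ^ (e - 1) * (-1) * 2 ^ (e - 1)) * h2e
  refine ⟨key, ?_⟩
  rw [key]
  exact mul_ne_zero (mul_ne_zero hche (pow_ne_zero _ (neg_ne_zero.mpr hchar2)))
    (pow_ne_zero _ (by norm_num : (-1 : F) ≠ 0))
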